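/- Let a = Σ_I a_I e^I ∈ Λ^{odd}(ℤ^b) be a sum of odd-degree basis monomials, and let j_m denote the symmetric multilinear insertion product. Then j_m(a,...,a) = m! · Σ_{{I_1,...,I_m} 1-regular, pairwise distinct} a_{I_1}···a_{I_m} j_m(e^{I_1},...,e^{I_m}); in particular j_m(a,...,a) is divisible by m! in Λ*(ℤ^b), so the insertion power a^{∘m} := j_m(a,...,a)/m! is well-defined over ℤ. -/

import Mathlib

open scoped Classical

/-- The exterior algebra `Λ*(ℤ^b)`, recorded via coefficients on the basis monomials
`e^I`, `I ⊆ {1,…,b}`. -/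
abbrev Exterior (b : ℕ) : Type := Finset (Fin b) → ℤ

/-- The basis monomial `e^I`. -/
def eMono {b : ℕ} (I : Finset (Fin b)) : Exterior b := fun S => if S = I then 1 else 0

/-- `v` and `w` are consecutive elements of `S` (the edges of the path graph on `S`). -/
def consecIn {b : ℕ} (S : Finset (Fin b)) (v w : Fin b) : Prop :=
  v ∈ S ∧ w ∈ S ∧ v ≠ w ∧ ∀ u ∈ S, ¬(min v w < u ∧ u < max v w)

/-- The underlying simple graph of the graph realization `R(I_1,…,I_m)`: path graphs on
each `I_k`, glued along shared labels. -/
def realGraph {b m : ℕ} (I : Fin m → Finset (Fin b)) : SimpleGraph (Fin b) where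
  Adj v w := ∃ k, consecIn (I k) v w
  symm := by
    constructor
    rintro v w ⟨k, h1, h2, h3, h4⟩
    exact ⟨k, h2, h1, h3.symm, by rw [min_comm w v, max_comm w v]; exact h4⟩
  loopless := by constructor; rintro v ⟨k, _, _, h3, _⟩; exact h3 rfl

/-- A family of subsets is 1-regular if its graph realization is a tree: all sets are
nonempty, the graph is connected on the union of the sets, and the total number of edges
(with multiplicity) equals the number of vertices minus one (so the multigraph has no
cycles and no repeated edges). -/
def OneRegular {b m : ℕ} (I : Fin m → Finset (Fin b)) : Prop :=
  (∀ k, (I k).Nonempty) ∧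
    (∑ k : Fin m, (((I k).card : ℤ) - 1)) = ((Finset.univ.biUnion I).card : ℤ) - 1 ∧
    ∀ v w : Fin b, v ∈ Finset.univ.biUnion I → w ∈ Finset.univ.biUnion I →
      (realGraph I).Reachable v w

/-- An (arbitrary) linear order code for subsets, used to enumerate unordered families by
their sorted tuples. -/
def subsetCode {b : ℕ} (I : Finset (Fin b)) : ℕ := ∑ x ∈ I, 2 ^ (x : ℕ)



lemma sum_range_two_pow (n : ℕ) : ∑ x ∈ Finset.range n, 2 ^ x < 2 ^ n := by
  induction n with
  | zero => simp
  | succ n ih => rw [Finset.sum_range_succ, pow_succ]; omega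

lemma sum_two_pow_lt {n : ℕ} {S : Finset ℕ} (h : ∀ x ∈ S, x < n) :
    ∑ x ∈ S, 2 ^ x < 2 ^ n :=
  lt_of_le_of_lt (Finset.sum_le_sum_of_subset (fun x hx => Finset.mem_range.2 (h x hx)))
    (sum_range_two_pow n)

lemma natCode_nonempty {T : Finset ℕ} (h : 0 < ∑ x ∈ T, 2 ^ x) : T.Nonempty := by
  by_contra hne
  rw [Finset.not_nonempty_iff_eq_empty] at hne
  simp [hne] at h

lemma natCode_inj : ∀ (n : ℕ) (S T : Finset ℕ), S.card = n →
    ∑ x ∈ S, 2 ^ x = ∑ x ∈ T, 2 ^ x → S = T := by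
  intro n
  induction n with
  | zero =>
    intro S T hS h
    rw [Finset.card_eq_zero] at hS
    subst hS
    simp only [Finset.sum_empty] at h
    by_contra hne
    obtain ⟨t, ht⟩ := Finset.nonempty_iff_ne_empty.2 (fun he => hne he.symm)
    have h1 : 2 ^ t ≤ ∑ x ∈ T, 2 ^ x :=
      Finset.single_le_sum (fun i _ => Nat.zero_le _) ht
    have h2 : 0 < 2 ^ t := pow_pos (by norm_num) t
    omega
  | succ n ih =>
    intro S T hScard h
    have hS : S.Nonempty := Finset.card_pos.1 (by omega)
    have hT : T.Nonempty := by
      apply natCode_nonempty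
      rw [← h]
      obtain ⟨s, hs⟩ := hS
      exact lt_of_lt_of_le (Nat.pow_pos (n := s) (by norm_num : 0 < 2))
        (Finset.single_le_sum (fun i _ => Nat.zero_le _) hs)
    set aS := S.max' hS with haS
    set aT := T.max' hT with haT
    have hSle : 2 ^ aS ≤ ∑ x ∈ S, 2 ^ x :=
      Finset.single_le_sum (fun i _ => Nat.zero_le _) (S.max'_mem hS)
    have hTle : 2 ^ aT ≤ ∑ x ∈ T, 2 ^ x :=
      Finset.single_le_sum (fun i _ => Nat.zero_le _) (T.max'_mem hT)
    have hSlt : ∑ x ∈ S, 2 ^ x < 2 ^ (aS + 1) :=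
      sum_two_pow_lt (fun x hx => Nat.lt_succ_of_le (S.le_max' x hx))
    have hTlt : ∑ x ∈ T, 2 ^ x < 2 ^ (aT + 1) :=
      sum_two_pow_lt (fun x hx => Nat.lt_succ_of_le (T.le_max' x hx))
    have hae : aS = aT := by
      have h1 : 2 ^ aS < 2 ^ (aT + 1) := lt_of_le_of_lt (h ▸ hSle) hTlt
      have h2 : 2 ^ aT < 2 ^ (aS + 1) := lt_of_le_of_lt (h ▸ hTle) hSlt
      have := (Nat.pow_lt_pow_iff_right (a := 2) (by norm_num)).1 h1
      have := (Nat.pow_lt_pow_iff_right (a := 2) (by norm_num)).1 h2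
      omega
    have hmemS : aS ∈ S := S.max'_mem hS
    have hmemT : aS ∈ T := hae ▸ T.max'_mem hT
    have hsum : ∑ x ∈ S.erase aS, 2 ^ x = ∑ x ∈ T.erase aS, 2 ^ x := by
      have e1 : ∑ x ∈ S.erase aS, 2 ^ x + 2 ^ aS = ∑ x ∈ S, 2 ^ x :=
        Finset.sum_erase_add _ _ hmemS
      have e2 : ∑ x ∈ T.erase aS, 2 ^ x + 2 ^ aS = ∑ x ∈ T, 2 ^ x :=
        Finset.sum_erase_add _ _ hmemT
      omega
    have hcard : (S.erase aS).card = n := by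
      rw [Finset.card_erase_of_mem hmemS]; omega
    have := ih (S.erase aS) (T.erase aS) hcard hsum
    have hST : S = insert aS (S.erase aS) := (Finset.insert_erase hmemS).symm
    rw [hST, this, Finset.insert_erase hmemT]

lemma subsetCode_injective {b : ℕ} : Function.Injective (subsetCode (b := b)) := by
  intro S T h
  have hS : subsetCode S = ∑ x ∈ S.image (Fin.val), 2 ^ x := by
    rw [Finset.sum_image (fun x _ y _ h => Fin.val_injective h)]; rfl
  have hT : subsetCode T = ∑ x ∈ T.image (Fin.val), 2 ^ x := by
    rw [Finset.sum_image (fun x _ y _ h => Fin.val_injective h)]; rfl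
  have := natCode_inj (S.image Fin.val).card (S.image Fin.val) (T.image Fin.val) rfl
    (by rw [← hS, ← hT, h])
  exact Finset.image_injective Fin.val_injective this

lemma oneRegular_comp {b m : ℕ} {I : Fin m → Finset (Fin b)} (σ : Equiv.Perm (Fin m))
    (h : OneRegular I) : OneRegular (I ∘ σ) := by
  obtain ⟨h1, h2, h3⟩ := h
  have hbi : Finset.univ.biUnion (I ∘ σ) = Finset.univ.biUnion I := by
    ext x
    simp only [Finset.mem_biUnion, Finset.mem_univ, true_and, Function.comp_apply]
    exact ⟨fun ⟨k, hk⟩ => ⟨σ k, hk⟩, fun ⟨k, hk⟩ => ⟨σ.symm k, by simpa using hk⟩⟩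
  have hg : realGraph (I ∘ σ) = realGraph I := by
    ext v w
    show (∃ k, consecIn ((I ∘ σ) k) v w) ↔ ∃ k, consecIn (I k) v w
    exact ⟨fun ⟨k, hk⟩ => ⟨σ k, hk⟩, fun ⟨k, hk⟩ => ⟨σ.symm k, by simpa using hk⟩⟩
  refine ⟨fun k => h1 _, ?_, ?_⟩
  · rw [hbi, ← h2]
    exact Equiv.sum_comp σ (fun k => ((I k).card : ℤ) - 1)
  · rw [hbi, hg]; exact h3


/-- Let `j = j_m` be the symmetric multilinear insertion product:
it vanishes on tuples of basis monomials which are not 1-regular (in particular on tuples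
with a repeated subset).  Then for `a = ∑_I a_I e^I` a sum of odd-degree basis monomials,
`j_m(a,…,a) = m! ∑_{{I_1,…,I_m} 1-regular, pairwise distinct} a_{I_1}⋯a_{I_m}
j_m(e^{I_1},…,e^{I_m})` (the unordered sum being realized as the sum over tuples which
are strictly increasing in a fixed linear order on subsets); in particular,
`j_m(a,…,a)` is divisible by `m!` in `Λ*(ℤ^b)`. -/
theorem insertion_power_divisible (b m : ℕ) (hm : 1 ≤ m)
    (j : MultilinearMap ℤ (fun _ : Fin m => Exterior b) (Exterior b))
    (hsym : ∀ (σ : Equiv.Perm (Fin m)) (v : Fin m → Exterior b), j (v ∘ σ) = j v)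
    (hvan : ∀ I : Fin m → Finset (Fin b), ¬ OneRegular I → j (fun k => eMono (I k)) = 0)
    (hrep : ∀ I : Fin m → Finset (Fin b), ¬ Function.Injective I →
      j (fun k => eMono (I k)) = 0)
    (a : Exterior b) (ha : ∀ S : Finset (Fin b), a S ≠ 0 → Odd S.card) :
    j (fun _ => a) =
        (m.factorial : ℤ) •
          ∑ I ∈ Finset.univ.filter
              (fun I : Fin m → Finset (Fin b) =>
                OneRegular I ∧ StrictMono fun k => subsetCode (I k)),
            (∏ k : Fin m, a (I k)) • j (fun k => eMono (I k)) ∧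
      ∃ c : Exterior b, j (fun _ => a) = (m.factorial : ℤ) • c := by
  classical
  -- term of the expansion
  set term : (Fin m → Finset (Fin b)) → Exterior b :=
    fun I => (∏ k : Fin m, a (I k)) • j (fun k => eMono (I k)) with hterm
  set Ssorted : Finset (Fin m → Finset (Fin b)) :=
    Finset.univ.filter (fun I : Fin m → Finset (Fin b) =>
      OneRegular I ∧ StrictMono fun k => subsetCode (I k)) with hSsorted
  have key : j (fun _ => a) = (m.factorial : ℤ) • ∑ I ∈ Ssorted, term I := by
    -- step 1 : expand a over the basis
    have hA : (fun _ : Fin m => a) =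
        fun _ : Fin m => ∑ S : Finset (Fin b), a S • eMono S := by
      funext _
      funext T
      simp only [Finset.sum_apply, Pi.smul_apply, eMono, smul_eq_mul, mul_ite, mul_one,
        mul_zero]
      rw [Finset.sum_ite_eq Finset.univ T a]
      simp
    rw [hA, j.map_sum]
    simp only [j.map_smul_univ]
    rw [← hterm]
    -- step 2 : discard vanishing terms
    have hzero : ∀ I : Fin m → Finset (Fin b),
        ¬ (OneRegular I ∧ Function.Injective I) → term I = 0 := by
      intro I hI
      rw [hterm]
      rcases Classical.em (OneRegular I) with h1 | h1
      · rcases Classical.em (Function.Injective I) with h2 | h2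
        · exact absurd ⟨h1, h2⟩ hI
        · simp [hrep I h2]
      · simp [hvan I h1]
    set Sgood : Finset (Fin m → Finset (Fin b)) :=
      Finset.univ.filter (fun I : Fin m → Finset (Fin b) =>
        OneRegular I ∧ Function.Injective I) with hSgood
    have hstep2 : ∑ I : Fin m → Finset (Fin b), term I = ∑ I ∈ Sgood, term I := by
      rw [hSgood]
      rw [Finset.sum_filter_of_ne]
      intro x _ hx
      by_contra hc
      exact hx (hzero x hc)
    rw [hstep2]
    -- step 3 : reindex by (sorted tuple, permutation)
    have hstep3 : ∑ I ∈ Sgood, term I =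
        ∑ p ∈ Ssorted ×ˢ (Finset.univ : Finset (Equiv.Perm (Fin m))),
          term (p.1 ∘ p.2) := by
      refine Finset.sum_nbij'
        (fun I => (I ∘ Tuple.sort (fun k => subsetCode (I k)),
          (Tuple.sort (fun k => subsetCode (I k)))⁻¹))
        (fun p => p.1 ∘ p.2) ?_ ?_ ?_ ?_ ?_
      · -- forward membership
        intro I hI
        rw [hSgood, Finset.mem_filter] at hI
        obtain ⟨-, hreg, hinj⟩ := hI
        set σ := Tuple.sort (fun k => subsetCode (I k)) with hσ
        rw [Finset.mem_product]
        refine ⟨?_, Finset.mem_univ _⟩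
        rw [hSsorted, Finset.mem_filter]
        refine ⟨Finset.mem_univ _, oneRegular_comp σ hreg, ?_⟩
        have hmono : Monotone ((fun k => subsetCode (I k)) ∘ σ) := Tuple.monotone_sort _
        have hfinj : Function.Injective ((fun k => subsetCode (I k)) ∘ σ) :=
          (subsetCode_injective.comp hinj).comp σ.injective
        exact hmono.strictMono_of_injective hfinj
      · -- backward membership
        intro p hp
        rw [Finset.mem_product, hSsorted, Finset.mem_filter] at hp
        obtain ⟨⟨-, hreg, hmono⟩, -⟩ := hp
        rw [hSgood, Finset.mem_filter]
        have hinj : Function.Injective p.1 := by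
          intro x y hxy
          exact hmono.injective (by simp [hxy])
        exact ⟨Finset.mem_univ _, oneRegular_comp p.2 hreg,
          hinj.comp p.2.injective⟩
      · -- left inverse
        intro I _
        funext k
        simp
      · -- right inverse
        intro p hp
        rw [Finset.mem_product, hSsorted, Finset.mem_filter] at hp
        obtain ⟨⟨-, hreg, hmono⟩, -⟩ := hp
        obtain ⟨J, τ⟩ := p
        simp only at hmono hreg ⊢
        set f : Fin m → ℕ := fun k => subsetCode ((J ∘ τ) k) with hf
        set σ := Tuple.sort f with hσ
        have hJinj : Function.Injective J := by
          intro x y hxy; exact hmono.injective (by simp [hxy])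
        have hfinj : Function.Injective f :=
          (subsetCode_injective.comp hJinj).comp τ.injective
        have hsm1 : StrictMono (f ∘ σ) :=
          (Tuple.monotone_sort f).strictMono_of_injective (hfinj.comp σ.injective)
        have hsm2 : StrictMono (fun k => subsetCode (J k)) := hmono
        have hrange : Set.range (f ∘ σ) = Set.range (fun k => subsetCode (J k)) := by
          have e1 : Set.range (f ∘ σ) = Set.range f :=
            Set.range_comp f σ ▸ by rw [σ.surjective.range_eq, Set.image_univ]
          have e2 : Set.range f = Set.range (fun k => subsetCode (J k)) := by
            rw [hf]
            show Set.range ((fun k => subsetCode (J k)) ∘ τ) = _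
            rw [Set.range_comp, τ.surjective.range_eq, Set.image_univ]
          rw [e1, e2]
        haveI : WellFoundedLT (Fin m) := inferInstance
        have heq : f ∘ σ = fun k => subsetCode (J k) :=
          (StrictMono.range_inj (β := Fin m) (γ := ℕ) hsm1 hsm2).1 hrange
        have hτσ : ∀ k, τ (σ k) = k := by
          intro k
          have : subsetCode (J (τ (σ k))) = subsetCode (J k) := congrFun heq k
          exact hJinj (subsetCode_injective this)
        have hστ : σ = τ⁻¹ := by
          apply Equiv.ext
          intro k
          apply τ.injective
          rw [hτσ k]
          simp
        have hcomp : (J ∘ τ) ∘ σ = J := by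
          funext k
          show J (τ (σ k)) = J k
          rw [hτσ]
        rw [hcomp, hστ, inv_inv]
      · -- summand equality
        intro I _
        have hc : (I ∘ (Tuple.sort fun k => subsetCode (I k))) ∘
            ⇑(Tuple.sort fun k => subsetCode (I k))⁻¹ = I := by
          funext k; simp
        rw [hc]
    rw [hstep3, Finset.sum_product]
    -- step 4 : inner sum over permutations
    have hinner : ∀ J ∈ Ssorted,
        ∑ τ : Equiv.Perm (Fin m), term (J ∘ τ) = (m.factorial : ℤ) • term J := by
      intro J _
      have hterm_inv : ∀ τ : Equiv.Perm (Fin m), term (J ∘ τ) = term J := by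
        intro τ
        rw [hterm]
        simp only [Function.comp_apply]
        have h1 : ∏ k : Fin m, a (J (τ k)) = ∏ k : Fin m, a (J k) :=
          Equiv.prod_comp τ (fun k => a (J k))
        have h2 : j (fun k => eMono (J (τ k))) = j (fun k => eMono (J k)) :=
          hsym τ (fun k => eMono (J k))
        rw [h1, h2]
      rw [Finset.sum_congr rfl (fun τ _ => hterm_inv τ), Finset.sum_const]
      rw [Finset.card_univ, Fintype.card_perm, Fintype.card_fin]
      rw [← Nat.cast_smul_eq_nsmul ℤ]
    rw [Finset.sum_congr rfl hinner, ← Finset.smul_sum]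
  exact ⟨key, ⟨∑ I ∈ Ssorted, term I, key⟩⟩
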